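/- If (a_n)_{n≥0} belongs to v^q, then the tail variation tends to zero: lim_{m→∞} ‖(0,…,0, a_{m+1}−a_m, a_{m+2}−a_m, …)‖_{v^q} = 0; consequently the eventually constant sequences are dense in v^q. -/

import Mathlib

open scoped ENNReal
open Filter

/-- Strong q-variation "norm" of a complex sequence, valued in `ℝ≥0∞`. -/
noncomputable def vq (q : ℝ) (a : ℕ → ℂ) : ℝ≥0∞ :=
  ⨆ n ∈ {n : ℕ → ℕ | StrictMono n ∧ n 0 = 0},
    ((‖a (n 0)‖₊ : ℝ≥0∞) ^ q + ∑' k : ℕ, (‖a (n (k+1)) - a (n k)‖₊ : ℝ≥0∞) ^ q) ^ (1/q)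

/-- The "tail" sequence `(0, …, 0, a_{m+1} - a_m, a_{m+2} - a_m, …)`. -/
def vqTail (a : ℕ → ℂ) (m : ℕ) : ℕ → ℂ := fun n => if n ≤ m then 0 else a n - a m

namespace VqAux

lemma tsum_split (f : ℕ → ℝ≥0∞) (K : ℕ) :
    ∑' i, f i = ∑ i ∈ Finset.range K, f i + ∑' i, f (i + K) := by
  rw [ENNReal.tsum_eq_iSup_nat, ENNReal.tsum_eq_iSup_nat, ENNReal.add_iSup]
  apply le_antisymm
  · refine iSup_le fun n => ?_
    refine le_trans ?_ (le_iSup _ n)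
    calc ∑ i ∈ Finset.range n, f i ≤ ∑ i ∈ Finset.range (K + n), f i := by
            apply Finset.sum_le_sum_of_subset
            intro x hx
            simp only [Finset.mem_range] at *
            omega
      _ = ∑ i ∈ Finset.range K, f i + ∑ i ∈ Finset.range n, f (K + i) :=
            Finset.sum_range_add f K n
      _ = ∑ i ∈ Finset.range K, f i + ∑ i ∈ Finset.range n, f (i + K) := by
            simp [Nat.add_comm]
  · refine iSup_le fun n => ?_
    refine le_trans ?_ (le_iSup (fun n => ∑ i ∈ Finset.range n, f i) (K + n))
    rw [Finset.sum_range_add]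
    gcongr with j hj
    · rw [Nat.add_comm]

/-- The `k`-th difference term of the `q`-variation along partition `n`. -/
noncomputable def dterm (q : ℝ) (a : ℕ → ℂ) (n : ℕ → ℕ) (k : ℕ) : ℝ≥0∞ :=
  (‖a (n (k+1)) - a (n k)‖₊ : ℝ≥0∞) ^ q

/-- Partitions starting at `m`. -/
def Part (m : ℕ) : Type := {n : ℕ → ℕ // StrictMono n ∧ n 0 = m}

instance (m : ℕ) : Nonempty (Part m) :=
  ⟨⟨fun k => m + k, strictMono_nat_of_lt_succ fun k => by omega, by simp⟩⟩

/-- The `q`-variation of `a` over partitions starting at `m`. -/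
noncomputable def Var (q : ℝ) (a : ℕ → ℂ) (m : ℕ) : ℝ≥0∞ :=
  ⨆ p : Part m, ∑' k, dterm q a p.1 k

lemma le_Var (q : ℝ) (a : ℕ → ℂ) {n : ℕ → ℕ} (hmono : StrictMono n) {m : ℕ}
    (h0 : n 0 = m) : ∑' k, dterm q a n k ≤ Var q a m :=
  le_iSup (fun p : Part m => ∑' k, dterm q a p.1 k) ⟨n, hmono, h0⟩

/-- Concatenation: a finite initial piece plus the variation from the endpoint
is at most the variation from the start. -/
lemma concat (q : ℝ) (a : ℕ → ℂ) (n : ℕ → ℕ) (hn : StrictMono n) (K : ℕ) :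
    (∑ j ∈ Finset.range K, dterm q a n j) + Var q a (n K) ≤ Var q a (n 0) := by
  rw [Var, ENNReal.add_iSup]
  refine iSup_le fun p => ?_
  obtain ⟨n'', hn'', h0⟩ := p
  set pp : ℕ → ℕ := fun j => if j < K then n j else n'' (j - K) with hpp
  have hplow : ∀ j, j ≤ K → pp j = n j := by
    intro j hj
    rcases lt_or_eq_of_le hj with h | h
    · simp [hpp, h]
    · subst h; simp [hpp, h0]
  have hphigh : ∀ j, pp (j + K) = n'' j := by
    intro j
    simp only [hpp]
    rw [if_neg (by omega)]
    congr 1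
    omega
  have hpmono : StrictMono pp := by
    apply strictMono_nat_of_lt_succ
    intro j
    rcases lt_or_ge j K with h | h
    · rw [hplow j h.le]
      rcases lt_or_ge (j+1) K with h' | h'
      · rw [hplow (j+1) h'.le]; exact hn (by omega)
      · have hjk : j + 1 = K := by omega
        rw [hjk, hplow K le_rfl]
        exact hn (by omega)
    · have e1 : pp j = n'' (j - K) := by simp [hpp, Nat.not_lt.2 h]
      have e2 : pp (j+1) = n'' (j - K + 1) := by
        simp only [hpp]
        rw [if_neg (by omega)]
        congr 1
        omega
      rw [e1, e2]
      exact hn'' (by omega)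
  have h00 : pp 0 = n 0 := hplow 0 (Nat.zero_le K)
  have key : ∑' k, dterm q a pp k =
      (∑ j ∈ Finset.range K, dterm q a n j) + ∑' k, dterm q a n'' k := by
    rw [tsum_split _ K]
    congr 1
    · apply Finset.sum_congr rfl
      intro j hj
      simp only [Finset.mem_range] at hj
      unfold dterm
      rw [hplow j hj.le, hplow (j+1) hj]
    · apply tsum_congr
      intro k
      unfold dterm
      have : k + K + 1 = (k + 1) + K := by omega
      rw [this, hphigh (k+1), hphigh k]
  calc (∑ j ∈ Finset.range K, dterm q a n j) + ∑' k, dterm q a n'' k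
      = ∑' k, dterm q a pp k := key.symm
    _ ≤ Var q a (n 0) := le_Var q a hpmono h00

lemma Var_antitone (q : ℝ) (a : ℕ → ℂ) : Antitone (Var q a) := by
  intro m m' hmm'
  rcases eq_or_lt_of_le hmm' with h | h
  · subst h; exact le_rfl
  · set n : ℕ → ℕ := fun j => if j = 0 then m else m' + (j - 1) with hn
    have hmono : StrictMono n := by
      apply strictMono_nat_of_lt_succ
      intro j
      rcases Nat.eq_zero_or_pos j with h0 | h0
      · subst h0; simp [hn]; omega
      · simp only [hn]
        rw [if_neg (by omega), if_neg (by omega)]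
        omega
    have h0 : n 0 = m := by simp [hn]
    have h1 : n 1 = m' := by simp [hn]
    have := concat q a n hmono 1
    rw [h0, h1] at this
    exact le_trans le_add_self this


lemma rpow_iSup {ι : Sort*} [Nonempty ι] (f : ι → ℝ≥0∞) {y : ℝ} (hy : 0 < y) :
    (⨆ i, f i) ^ y = ⨆ i, (f i) ^ y := by
  have := (ENNReal.orderIsoRpow y hy).map_iSup f
  simpa only [ENNReal.orderIsoRpow_apply] using this

lemma Var_lt_top {q : ℝ} (hq : 0 < q) (a : ℕ → ℂ) (hfin : vq q a < ∞) :
    Var q a 0 < ∞ := by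
  have hq' : (0:ℝ) < 1/q := by positivity
  have key : (Var q a 0) ^ (1/q) ≤ vq q a := by
    rw [Var, rpow_iSup _ hq']
    refine iSup_le fun p => ?_
    obtain ⟨n, hmono, h0⟩ := p
    calc (∑' k, dterm q a n k) ^ (1/q)
        ≤ ((‖a (n 0)‖₊ : ℝ≥0∞) ^ q + ∑' k, dterm q a n k) ^ (1/q) :=
          ENNReal.rpow_le_rpow le_add_self hq'.le
      _ ≤ vq q a := le_iSup₂ (f := fun (n : ℕ → ℕ)
            (_ : n ∈ {n : ℕ → ℕ | StrictMono n ∧ n 0 = 0}) =>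
            ((‖a (n 0)‖₊ : ℝ≥0∞) ^ q + ∑' k : ℕ,
              (‖a (n (k+1)) - a (n k)‖₊ : ℝ≥0∞) ^ q) ^ (1/q)) n ⟨hmono, h0⟩
  have : (Var q a 0) ^ (1/q) < ∞ := lt_of_le_of_lt key hfin
  exact (ENNReal.rpow_lt_top_iff_of_pos hq').mp this

lemma Var_tendsto (q : ℝ) (a : ℕ → ℂ) (hfin : Var q a 0 < ∞) :
    Tendsto (Var q a) atTop (nhds 0) := by
  have hanti := Var_antitone q a
  have htend : Tendsto (Var q a) atTop (nhds (⨅ m, Var q a m)) :=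
    tendsto_atTop_iInf hanti
  suffices h : (⨅ m, Var q a m) = 0 by rwa [h] at htend
  by_contra hL
  set L := ⨅ m, Var q a m with hLdef
  have hL0 : L ≠ 0 := hL
  have hLle : L ≤ Var q a 0 := iInf_le _ 0
  have hLtop : L ≠ ∞ := (lt_of_le_of_lt hLle hfin).ne
  set δ := L / 2 with hδdef
  have hδ0 : δ ≠ 0 := by
    simp only [hδdef, ne_eq, ENNReal.div_eq_zero_iff]
    push_neg
    exact ⟨hL0, by norm_num⟩
  have hδtop : δ ≠ ∞ := by
    simp only [hδdef]
    exact (ENNReal.div_lt_top hLtop (by norm_num)).ne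
  have hδL : δ < L := ENNReal.half_lt_self hL0 hLtop
  -- step lemma
  have step : ∀ m : ℕ, ∃ m', m < m' ∧ δ + Var q a m' ≤ Var q a m := by
    intro m
    have h1 : δ < Var q a m := lt_of_lt_of_le hδL (iInf_le _ m)
    rw [Var, lt_iSup_iff] at h1
    obtain ⟨⟨n, hmono, h0⟩, hp⟩ := h1
    rw [ENNReal.tsum_eq_iSup_sum, lt_iSup_iff] at hp
    obtain ⟨s, hs⟩ := hp
    set K := (s.sup id) + 1 with hK
    have hsub : s ⊆ Finset.range K := by
      intro x hx
      simp only [Finset.mem_range, hK]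
      exact Nat.lt_succ_of_le (Finset.le_sup (f := id) hx)
    have hδsum : δ < ∑ j ∈ Finset.range K, dterm q a n j :=
      lt_of_lt_of_le hs (Finset.sum_le_sum_of_subset hsub)
    refine ⟨n K, ?_, ?_⟩
    · calc m = n 0 := h0.symm
        _ < n K := hmono (by omega)
    · calc δ + Var q a (n K)
          ≤ (∑ j ∈ Finset.range K, dterm q a n j) + Var q a (n K) := by
            exact add_le_add hδsum.le le_rfl
        _ ≤ Var q a (n 0) := concat q a n hmono K
        _ = Var q a m := by rw [h0]
  -- iterate
  have iter : ∀ k : ℕ, ∃ m, (k : ℝ≥0∞) * δ + Var q a m ≤ Var q a 0 := by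
    intro k
    induction k with
    | zero => exact ⟨0, by simp⟩
    | succ k ih =>
        obtain ⟨m, hm⟩ := ih
        obtain ⟨m', _, hm'⟩ := step m
        refine ⟨m', ?_⟩
        have heq : ((k+1 : ℕ):ℝ≥0∞) * δ + Var q a m'
            = (k:ℝ≥0∞) * δ + (δ + Var q a m') := by push_cast; ring
        rw [heq]
        calc (k:ℝ≥0∞) * δ + (δ + Var q a m')
            ≤ (k:ℝ≥0∞) * δ + Var q a m := by gcongr
          _ ≤ Var q a 0 := hm
  have hbound : ∀ k : ℕ, (k : ℝ≥0∞) * δ ≤ Var q a 0 := by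
    intro k
    obtain ⟨m, hm⟩ := iter k
    exact le_trans (self_le_add_right _ _) hm
  -- contradiction
  obtain ⟨k, hk⟩ := ENNReal.exists_nat_gt (ENNReal.div_lt_top hfin.ne hδ0).ne
  have : Var q a 0 < (k : ℝ≥0∞) * δ := by
    rwa [ENNReal.div_lt_iff (Or.inl hδ0) (Or.inl hδtop)] at hk
  exact absurd (hbound k) (not_le.mpr this)


lemma tail_le {q : ℝ} (hq : 0 < q) (a : ℕ → ℂ) (m : ℕ) :
    vq q (vqTail a m) ≤ (Var q a m) ^ (1/q) := by
  set b := vqTail a m with hbdef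
  have hb : ∀ j, m < j → b j = a j - a m := fun j hj => if_neg (not_le.2 hj)
  have hb0 : ∀ j, j ≤ m → b j = 0 := fun j hj => if_pos hj
  refine iSup₂_le fun n hn => ?_
  obtain ⟨hmono, h0⟩ := hn
  have hfirst : (‖b (n 0)‖₊ : ℝ≥0∞) ^ q = 0 := by
    rw [h0, hb0 0 (Nat.zero_le m)]
    simp [ENNReal.zero_rpow_of_pos hq]
  rw [hfirst, zero_add]
  refine ENNReal.rpow_le_rpow ?_ (by positivity)
  -- the tsum is a tsum of dterms of b
  have hS : ∑' k : ℕ, (‖b (n (k+1)) - b (n k)‖₊ : ℝ≥0∞) ^ q = ∑' k, dterm q b n k := rfl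
  rw [hS]
  -- largest index K with n K ≤ m
  set K := Nat.findGreatest (fun k => n k ≤ m) m with hKdef
  have hK : n K ≤ m :=
    Nat.findGreatest_spec (P := fun k => n k ≤ m) (Nat.zero_le m)
      (by show n 0 ≤ m; rw [h0]; exact Nat.zero_le m)
  have hgt : ∀ k, K < k → m < n k := by
    intro k hk
    rcases le_or_gt k m with h | h
    · by_contra h'
      push_neg at h'
      exact Nat.findGreatest_is_greatest hk h h'
    · exact lt_of_lt_of_le h (hmono.le_apply)
  set p : ℕ → ℕ := fun j => if j = 0 then m else n (K + j) with hpdef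
  have hp0 : p 0 = m := by simp [hpdef]
  have hpsucc : ∀ j, p (j+1) = n (K + (j+1)) := by
    intro j; simp [hpdef]
  have hpmono : StrictMono p := by
    apply strictMono_nat_of_lt_succ
    intro j
    rcases Nat.eq_zero_or_pos j with h | h
    · subst h
      rw [hp0, hpsucc 0]
      exact hgt _ (by omega)
    · obtain ⟨j', rfl⟩ := Nat.exists_eq_succ_of_ne_zero h.ne'
      rw [hpsucc, hpsucc]
      exact hmono (by omega)
  rw [tsum_split _ K]
  have hzero : ∑ k ∈ Finset.range K, dterm q b n k = 0 := by
    apply Finset.sum_eq_zero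
    intro k hk
    simp only [Finset.mem_range] at hk
    have h1 : n (k+1) ≤ m := le_trans (hmono.monotone (by omega : k+1 ≤ K)) hK
    have h2 : n k ≤ m := le_trans (hmono.monotone (by omega : k ≤ K)) hK
    unfold dterm
    rw [hb0 _ h1, hb0 _ h2]
    simp [ENNReal.zero_rpow_of_pos hq]
  rw [hzero, zero_add]
  have hterm : ∀ k, dterm q b n (k + K) = dterm q a p k := by
    intro k
    unfold dterm
    congr 1
    have hhigh : m < n (k + K + 1) := hgt _ (by omega)
    rcases Nat.eq_zero_or_pos k with h | h
    · subst h
      have hnK : n (0 + K) ≤ m := by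
        rw [show 0 + K = K from by omega]; exact hK
      rw [hb _ hhigh, hb0 _ hnK, hp0, hpsucc 0]
      rw [show 0 + K + 1 = K + (0 + 1) from by omega]
      ring_nf
    · obtain ⟨k', rfl⟩ := Nat.exists_eq_succ_of_ne_zero h.ne'
      have hmid : m < n (k' + 1 + K) := hgt _ (by omega)
      rw [hb _ hhigh, hb _ hmid, hpsucc, hpsucc]
      rw [show k' + 1 + K + 1 = K + (k' + 1 + 1) from by omega,
        show k' + 1 + K = K + (k' + 1) from by omega]
      ring_nf
  calc ∑' k, dterm q b n (k + K) = ∑' k, dterm q a p k := tsum_congr hterm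
    _ ≤ Var q a m := le_Var q a hpmono hp0

end VqAux

/-- If `a ∈ v^q` then the tail variation tends to `0`; consequently the eventually
constant sequences are dense in `v^q`. -/
theorem stmt_2 (q : ℝ) (hq : 1 ≤ q) (a : ℕ → ℂ) (hfin : vq q a < ∞) :
    Tendsto (fun m => vq q (vqTail a m)) atTop (nhds 0) ∧
      ∀ ε : ℝ≥0∞, 0 < ε →
        ∃ b : ℕ → ℂ, (∃ N : ℕ, ∀ n, N ≤ n → b n = b N) ∧
          vq q (fun n => a n - b n) < ε := by
  have hq0 : (0:ℝ) < q := lt_of_lt_of_le one_pos hq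
  have hq' : (0:ℝ) < 1/q := by positivity
  have hVfin : VqAux.Var q a 0 < ∞ := VqAux.Var_lt_top hq0 a hfin
  have hVtend := VqAux.Var_tendsto q a hVfin
  have htail : ∀ m, vq q (vqTail a m) ≤ (VqAux.Var q a m) ^ (1/q) :=
    VqAux.tail_le hq0 a
  have main : Tendsto (fun m => vq q (vqTail a m)) atTop (nhds 0) := by
    rw [ENNReal.tendsto_nhds_zero]
    intro ε hε
    set ε' := min ε 1 with hε'
    have hε'0 : 0 < ε' := lt_min hε one_pos
    have hε'top : ε' ≠ ∞ :=
      (lt_of_le_of_lt (min_le_right _ _) (by norm_num : (1:ℝ≥0∞) < ∞)).ne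
    have hpos : 0 < ε' ^ q := ENNReal.rpow_pos hε'0 hε'top
    have hev : ∀ᶠ m in atTop, VqAux.Var q a m ≤ ε' ^ q :=
      ENNReal.tendsto_nhds_zero.mp hVtend _ hpos
    filter_upwards [hev] with m hm
    calc vq q (vqTail a m) ≤ (VqAux.Var q a m) ^ (1/q) := htail m
      _ ≤ (ε' ^ q) ^ (1/q) := ENNReal.rpow_le_rpow hm hq'.le
      _ = ε' := by
          rw [← ENNReal.rpow_mul, mul_one_div_cancel hq0.ne', ENNReal.rpow_one]
      _ ≤ ε := min_le_left _ _
  refine ⟨main, fun ε hε => ?_⟩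
  obtain ⟨c, hc0, hcε⟩ := exists_between hε
  obtain ⟨m, hm⟩ := (ENNReal.tendsto_nhds_zero.mp main c hc0).exists
  refine ⟨fun n => if n ≤ m then a n else a m, ⟨m, fun n hn => ?_⟩, ?_⟩
  · simp only
    rw [if_pos le_rfl]
    by_cases h : n ≤ m
    · rw [if_pos h, le_antisymm h hn]
    · rw [if_neg h]
  · have heq : (fun n => a n - if n ≤ m then a n else a m) = vqTail a m := by
      funext n
      by_cases h : n ≤ m
      · simp [vqTail, h]
      · simp [vqTail, h]
    rw [heq]
    exact lt_of_le_of_lt hm hcε
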